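/- Let A ∈ M_2(ℂ) be upper triangular with Tr(A) a nonnegative real number, and let S ∈ M_2(ℂ) be Hermitian and upper triangular (hence diagonal with real entries) with Re(A) ≤ S. Let (A_m)_{m≥1} be a sequence of strictly upper triangular matrices in M_2(ℂ) with ‖A_m‖ ≤ 1 for every m. Set α_0 = Tr(A) and α_m = Tr(A A_m*) for m ≥ 1. Then for every real r with 0 ≤ r ≤ 1/2, the series ∑_{m=0}^∞ |α_m| r^m converges and ∑_{m=0}^∞ |α_m| r^m ≤ Tr(S). -/

import Mathlib

open Matrix
open scoped Matrix.Norms.L2Operator ComplexOrder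

set_option maxHeartbeats 1000000 in
/-- **Bohr's inequality for 2×2 upper triangular matrices** (radius `1/2`). -/
theorem bohr_matrix_two_by_two
    (A S : Matrix (Fin 2) (Fin 2) ℂ)
    (hA_ut : ∀ i j : Fin 2, j < i → A i j = 0)
    (hA_tr : 0 ≤ A.trace)
    (hS_herm : S.IsHermitian)
    (hS_ut : ∀ i j : Fin 2, j < i → S i j = 0)
    (hAS : (S - (2 : ℂ)⁻¹ • (A + Aᴴ)).PosSemidef)
    (B : ℕ → Matrix (Fin 2) (Fin 2) ℂ)
    (hB_sut : ∀ m : ℕ, 1 ≤ m → ∀ i j : Fin 2, j ≤ i → B m i j = 0)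
    (hB_norm : ∀ m : ℕ, 1 ≤ m → ‖B m‖ ≤ 1)
    (α : ℕ → ℂ)
    (hα0 : α 0 = A.trace)
    (hα : ∀ m : ℕ, 1 ≤ m → α m = (A * (B m)ᴴ).trace)
    (r : ℝ) (hr0 : 0 ≤ r) (hr1 : r ≤ 1 / 2) :
    Summable (fun m : ℕ => ‖α m‖ * r ^ m) ∧
      ∑' m : ℕ, ‖α m‖ * r ^ m ≤ S.trace.re := by
  have hA10 : A (1 : Fin 2) 0 = 0 := hA_ut 1 0 (by norm_num)
  set b : ℂ := A 0 1 with hbdef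
  set K : ℝ := ‖b‖ with hK
  have hK0 : 0 ≤ K := norm_nonneg b
  -- `α m = b * conj (B m 0 1)` for `m ≥ 1`
  have hαm : ∀ m, 1 ≤ m → α m = b * (starRingEnd ℂ) (B m 0 1) := by
    intro m hm
    have h00 : B m 0 0 = 0 := hB_sut m hm 0 0 le_rfl
    have h10 : B m 1 0 = 0 := hB_sut m hm 1 0 (by norm_num)
    have h11 : B m 1 1 = 0 := hB_sut m hm 1 1 le_rfl
    rw [hα m hm]
    simp [Matrix.trace_fin_two, Matrix.mul_apply, Fin.sum_univ_two,
      Matrix.conjTranspose_apply, h00, h10, h11, hA10, hbdef]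
  -- entry bound from the operator norm
  have hBb : ∀ m, 1 ≤ m → ‖B m 0 1‖ ≤ 1 := by
    intro m hm
    have h11 : B m 1 1 = 0 := hB_sut m hm 1 1 le_rfl
    have hmv := Matrix.l2_opNorm_mulVec (B m)
      (EuclideanSpace.single (1 : Fin 2) (1 : ℂ))
    rw [EuclideanSpace.norm_single] at hmv
    have hent : ∀ i, (B m *ᵥ (EuclideanSpace.single (1 : Fin 2) (1 : ℂ) : Fin 2 → ℂ)) i
        = B m i 1 := by
      intro i
      simp [Matrix.mulVec, dotProduct, Fin.sum_univ_two, EuclideanSpace.single_apply]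
    have hnorm : ‖(EuclideanSpace.equiv (Fin 2) ℂ).symm
        (B m *ᵥ (EuclideanSpace.single (1 : Fin 2) (1 : ℂ) : Fin 2 → ℂ))‖
        = ‖B m 0 1‖ := by
      rw [EuclideanSpace.norm_eq, Fin.sum_univ_two]
      simp [hent, h11]
    rw [hnorm] at hmv
    calc ‖B m 0 1‖ ≤ ‖B m‖ * ‖(1 : ℂ)‖ := hmv
    _ ≤ 1 := by simpa using hB_norm m hm
  -- abs of α m for m ≥ 1
  have habs : ∀ m, 1 ≤ m → ‖α m‖ ≤ K := by
    intro m hm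
    rw [hαm m hm]
    rw [norm_mul]
    have : ‖(starRingEnd ℂ) (B m 0 1)‖ ≤ 1 := by
      rw [Complex.norm_conj]; exact hBb m hm
    calc ‖b‖ * ‖(starRingEnd ℂ) (B m 0 1)‖ ≤ K * 1 :=
      mul_le_mul_of_nonneg_left this hK0
    _ = K := mul_one K
  -- the key inequality from positive semidefiniteness
  set M := S - (2 : ℂ)⁻¹ • (A + Aᴴ) with hM
  have hS10 : S 1 0 = 0 := hS_ut 1 0 (by norm_num)
  have hS01 : S 0 1 = 0 := by
    have := congrFun (congrFun hS_herm 0) 1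
    rw [Matrix.conjTranspose_apply, hS10] at this
    simpa using this.symm
  have hkey : (A.trace).re + K ≤ (S.trace).re := by
    set c : ℂ := if hb : b = 0 then 1 else (starRingEnd ℂ) b / (K : ℂ) with hc
    have hKne : b ≠ 0 → (K : ℂ) ≠ 0 := by
      intro hb h
      exact hb (norm_eq_zero.mp (by exact_mod_cast h))
    have hbc : b * c = (K : ℂ) := by
      by_cases hb : b = 0
      · simp [hc, hb, hK]
      · rw [hc, dif_neg hb]
        field_simp [hKne hb]
        rw [Complex.mul_conj, hK, Complex.normSq_eq_norm_sq]
        push_cast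
        ring
    have hbc' : (starRingEnd ℂ) b * (starRingEnd ℂ) c = (K : ℂ) := by
      calc (starRingEnd ℂ) b * (starRingEnd ℂ) c
          = (starRingEnd ℂ) (b * c) := (map_mul (starRingEnd ℂ) b c).symm
        _ = (starRingEnd ℂ) ((K : ℝ) : ℂ) := by rw [hbc]
        _ = ((K : ℝ) : ℂ) := Complex.conj_ofReal K
    have hcc : (starRingEnd ℂ) c * c = 1 := by
      by_cases hb : b = 0
      · simp [hc, hb]
      · rw [hc, dif_neg hb]
        rw [map_div₀, Complex.conj_conj, Complex.conj_ofReal, div_mul_div_comm,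
          Complex.mul_conj, Complex.normSq_eq_norm_sq, ← hK]
        push_cast
        rw [sq, div_self (mul_ne_zero (hKne hb) (hKne hb))]
    have e01 : M 0 1 = -((2 : ℂ)⁻¹ * b) := by
      simp [hM, Matrix.sub_apply, Matrix.smul_apply, Matrix.add_apply,
        Matrix.conjTranspose_apply, hS01, hA10, hbdef]
    have e10 : M 1 0 = -((2 : ℂ)⁻¹ * (starRingEnd ℂ) b) := by
      simp [hM, Matrix.sub_apply, Matrix.smul_apply, Matrix.add_apply,
        Matrix.conjTranspose_apply, hS10, hA10, hbdef]
    have hq := hAS.dotProduct_mulVec_nonneg ![1, c]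
    have hv : star ![1, c] ⬝ᵥ (M *ᵥ ![1, c]) = M 0 0 + M 1 1 - (K : ℂ) := by
      simp only [dotProduct, Matrix.mulVec, Fin.sum_univ_two, Pi.star_apply,
        Matrix.cons_val_zero, Matrix.cons_val_one, Matrix.head_cons, e01, e10]
      rw [star_one]
      simp only [Complex.star_def]
      linear_combination (-(2 : ℂ)⁻¹) * hbc + (-(2 : ℂ)⁻¹) * hbc' + (M 1 1) * hcc
    rw [hv] at hq
    have hre : 0 ≤ (M 0 0 + M 1 1 - (K : ℂ)).re := by
      rw [Complex.le_def] at hq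
      simpa using hq.1
    have hM00 : (M 0 0).re = (S 0 0).re - (A 0 0).re := by
      have : M 0 0 = S 0 0 - ((A 0 0).re : ℂ) := by
        simp only [hM, Matrix.sub_apply, Matrix.smul_apply, Matrix.add_apply,
          Matrix.conjTranspose_apply, smul_eq_mul, Complex.star_def]
        rw [Complex.add_conj]
        push_cast
        ring
      rw [this]
      simp
    have hM11 : (M 1 1).re = (S 1 1).re - (A 1 1).re := by
      have : M 1 1 = S 1 1 - ((A 1 1).re : ℂ) := by
        simp only [hM, Matrix.sub_apply, Matrix.smul_apply, Matrix.add_apply,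
          Matrix.conjTranspose_apply, smul_eq_mul, Complex.star_def]
        rw [Complex.add_conj]
        push_cast
        ring
      rw [this]
      simp
    simp only [Complex.sub_re, Complex.add_re, Complex.ofReal_re, hM00, hM11] at hre
    simp only [Matrix.trace_fin_two, Complex.add_re]
    linarith
  -- abs of α 0
  have him : (A.trace).im = 0 := (Complex.nonneg_iff.mp hA_tr).2.symm
  have hAre : 0 ≤ (A.trace).re := (Complex.nonneg_iff.mp hA_tr).1
  have habs0 : ‖α 0‖ = (A.trace).re := by
    have hco : A.trace = ((A.trace).re : ℂ) := by
      rw [Complex.ext_iff]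
      exact ⟨(Complex.ofReal_re _).symm, by rw [Complex.ofReal_im, him]⟩
    rw [hα0, hco, Complex.norm_real, Real.norm_eq_abs, abs_of_nonneg hAre, Complex.ofReal_re]
  -- summability
  set C : ℝ := max (A.trace).re K with hC
  have hrlt : r < 1 := by linarith
  have hgeo : Summable fun m : ℕ => C * r ^ m :=
    (summable_geometric_of_lt_one hr0 hrlt).mul_left C
  have hfle : ∀ m : ℕ, ‖α m‖ * r ^ m ≤ C * r ^ m := by
    intro m
    have hrm : 0 ≤ r ^ m := pow_nonneg hr0 m
    rcases Nat.eq_zero_or_pos m with h | h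
    · subst h
      simp [habs0, hC, le_max_left]
    · exact mul_le_mul_of_nonneg_right ((habs m h).trans (le_max_right _ _)) hrm
  have hfpos : ∀ m : ℕ, 0 ≤ ‖α m‖ * r ^ m := fun m =>
    mul_nonneg (norm_nonneg _) (pow_nonneg hr0 m)
  have hsumm : Summable fun m : ℕ => ‖α m‖ * r ^ m :=
    Summable.of_nonneg_of_le hfpos hfle hgeo
  refine ⟨hsumm, ?_⟩
  -- bound on the tsum
  have htail_summ : Summable fun m : ℕ => ‖α (m + 1)‖ * r ^ (m + 1) :=
    (summable_nat_add_iff 1).2 hsumm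
  have hgeo2 : Summable fun m : ℕ => K * r * r ^ m :=
    (summable_geometric_of_lt_one hr0 hrlt).mul_left (K * r)
  have htail_le : (∑' m : ℕ, ‖α (m + 1)‖ * r ^ (m + 1)) ≤ K * r * (1 - r)⁻¹ := by
    have h1 : (∑' m : ℕ, ‖α (m + 1)‖ * r ^ (m + 1))
        ≤ ∑' m : ℕ, K * r * r ^ m := by
      refine Summable.tsum_le_tsum (fun m => ?_) htail_summ hgeo2
      have : ‖α (m + 1)‖ * r ^ (m + 1) ≤ K * r ^ (m + 1) :=
        mul_le_mul_of_nonneg_right (habs (m + 1) (Nat.succ_le_succ (Nat.zero_le m)))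
          (pow_nonneg hr0 _)
      calc ‖α (m + 1)‖ * r ^ (m + 1) ≤ K * r ^ (m + 1) := this
      _ = K * r * r ^ m := by ring
    rw [tsum_mul_left, tsum_geometric_of_lt_one hr0 hrlt] at h1
    exact h1
  have hr2 : K * r * (1 - r)⁻¹ ≤ K := by
    have h1r : (0 : ℝ) < 1 - r := by linarith
    rw [mul_inv_le_iff₀ h1r]
    nlinarith
  have hsplit : (∑' m : ℕ, ‖α m‖ * r ^ m)
      = ‖α 0‖ * r ^ 0 + ∑' m : ℕ, ‖α (m + 1)‖ * r ^ (m + 1) :=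
    Summable.tsum_eq_zero_add hsumm
  rw [hsplit, habs0, pow_zero, mul_one]
  linarith
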